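/- Let X be supported on 𝒳 = {x_1,...,x_n}, let 1 ≤ k < n, and let α ∈ (0,∞]. If Q* is a k-guess strategy achieving the minimum in the definition of ME^{(k)}_α(P_X), then Q*(a_1,...,a_k) = 0 for every tuple (a_1,...,a_k) ∈ 𝒳^k such that a_i = a_j for some i ≠ j. -/

import Mathlib

open Finset
open scoped ENNReal

/-- A `k`-guess strategy on `Fin n` is a probability mass function on `k`-tuples. -/
def IsStrategy {n k : ℕ} (Q : (Fin k → Fin n) → ℝ) : Prop :=
  (∀ a, 0 ≤ Q a) ∧ ∑ a, Q a = 1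

/-- `succProb Q x` is the probability that at least one of the `k` guesses equals `x`. -/
noncomputable def succProb {n k : ℕ} (Q : (Fin k → Fin n) → ℝ) (x : Fin n) : ℝ :=
  ∑ a ∈ Finset.univ.filter (fun a : Fin k → Fin n => ∃ j, a j = x), Q a

/-- The `α`-loss for `α ∈ (0,∞]`, valued in `ℝ≥0∞`: for `α = ∞` it is `1 - p`, for
`α = 1` it is `log(1/p)` (so `+∞` at `p = 0`), and otherwise it is
`(α/(α-1))(1 - p^{(α-1)/α})` (which is `+∞` at `p = 0` when `α < 1`). -/
noncomputable def alphaLossE (α : ℝ≥0∞) (p : ℝ) : ℝ≥0∞ :=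
  if α = ⊤ then ENNReal.ofReal (1 - p)
  else if α = 1 then (if p = 0 then ⊤ else ENNReal.ofReal (Real.log (1 / p)))
  else if p = 0 ∧ α < 1 then ⊤
  else ENNReal.ofReal ((α.toReal / (α.toReal - 1)) * (1 - p ^ ((α.toReal - 1) / α.toReal)))

lemma alphaLoss_lt_top {α : ℝ≥0∞} {p : ℝ} (hp : p ≠ 0) : alphaLossE α p < ⊤ := by
  unfold alphaLossE
  split_ifs with h1 h2 h3 h4 <;> first | exact ENNReal.ofReal_lt_top | simp_all

lemma alphaLoss_strictAnti {α : ℝ≥0∞} (hα : 0 < α) {s t : ℝ} (hs : 0 ≤ s) (hst : s < t)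
    (ht1 : t ≤ 1) : alphaLossE α t < alphaLossE α s := by
  have ht0 : 0 < t := lt_of_le_of_lt hs hst
  have hs1 : s < 1 := lt_of_lt_of_le hst ht1
  unfold alphaLossE
  by_cases hT : α = ⊤
  · simp only [hT, if_pos rfl]
    exact (ENNReal.ofReal_lt_ofReal_iff (by linarith)).mpr (by linarith)
  by_cases h1 : α = 1
  · simp only [h1, if_neg hT, if_pos rfl, if_neg ht0.ne']
    by_cases hs0 : s = 0
    · simp [hs0, ENNReal.ofReal_lt_top]
    · have hs0' : 0 < s := lt_of_le_of_ne hs (Ne.symm hs0)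
      rw [if_neg hs0]
      refine (ENNReal.ofReal_lt_ofReal_iff ?_).mpr ?_
      · exact Real.log_pos (by rw [lt_div_iff₀ hs0']; linarith)
      · exact Real.log_lt_log (by positivity) (by
          rw [div_lt_div_iff₀ ht0 hs0']; linarith)
  · have hA : 0 < α.toReal := ENNReal.toReal_pos hα.ne' hT
    have hA1 : α.toReal ≠ 1 := by
      intro h
      exact h1 (by rw [← ENNReal.ofReal_toReal hT, h]; simp)
    set A := α.toReal with hAdef
    set β := (A - 1) / A with hβdef
    set c := A / (A - 1) with hcdef
    simp only [if_neg hT, if_neg h1]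
    rcases lt_or_gt_of_ne hA1 with hAlt | hAgt
    · -- A < 1, so α < 1, β < 0, c < 0
      have hαlt : α < 1 :=
        (ENNReal.toReal_lt_toReal hT ENNReal.one_ne_top).mp (by simpa using hAlt)
      have hβ : β < 0 := div_neg_of_neg_of_pos (by linarith) hA
      have hc : c < 0 := div_neg_of_pos_of_neg hA (by linarith)
      rw [if_neg (by simp [ht0.ne'])]
      by_cases hs0 : s = 0
      · rw [if_pos ⟨hs0, hαlt⟩]; exact ENNReal.ofReal_lt_top
      · have hs0' : 0 < s := lt_of_le_of_ne hs (Ne.symm hs0)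
        rw [if_neg (by simp [hs0])]
        have h2 : t ^ β < s ^ β := Real.rpow_lt_rpow_of_neg hs0' hst hβ
        have h3 : 1 < s ^ β := by
          rw [Real.one_lt_rpow_iff_of_pos hs0']
          exact Or.inr ⟨hs1, hβ⟩
        refine (ENNReal.ofReal_lt_ofReal_iff ?_).mpr ?_
        · exact mul_pos_of_neg_of_neg hc (by linarith)
        · exact mul_lt_mul_of_neg_left (by linarith) hc
    · -- 1 < A
      have hαgt : ¬ α < 1 := by
        intro h
        have := ENNReal.toReal_mono (by simp) h.le
        simp only [ENNReal.toReal_one] at this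
        linarith
      have hβ : 0 < β := div_pos (by linarith) hA
      have hc : 0 < c := div_pos hA (by linarith)
      rw [if_neg (fun h => hαgt h.2), if_neg (fun h => hαgt h.2)]
      have h2 : s ^ β < t ^ β := Real.rpow_lt_rpow hs hst hβ
      have h3 : t ^ β ≤ 1 := Real.rpow_le_one ht0.le ht1 hβ.le
      refine (ENNReal.ofReal_lt_ofReal_iff ?_).mpr ?_
      · nlinarith
      · nlinarith

/-- **Lemma 1**: an optimal `k`-guess strategy puts zero probability on tuples with a
repeated guess. -/
theorem optimal_strategy_vanishes_on_repeats
    {n k : ℕ} (hk1 : 1 ≤ k) (hkn : k < n)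
    (α : ℝ≥0∞) (hα : 0 < α)
    (p : Fin n → ℝ) (hp0 : ∀ i, 0 < p i) (hp1 : ∑ i, p i = 1)
    (Q : (Fin k → Fin n) → ℝ) (hQ : IsStrategy Q)
    (hopt : ∀ Q' : (Fin k → Fin n) → ℝ, IsStrategy Q' →
      (∑ i, ENNReal.ofReal (p i) * alphaLossE α (succProb Q i)) ≤
        ∑ i, ENNReal.ofReal (p i) * alphaLossE α (succProb Q' i)) :
    ∀ a : Fin k → Fin n, (∃ i j, i ≠ j ∧ a i = a j) → Q a = 0 := by
  intro a ⟨i, j, hij, haij⟩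
  by_contra hQa
  have hQa0 : 0 < Q a := lt_of_le_of_ne (hQ.1 a) (Ne.symm hQa)
  -- x not in the range of a
  have hcard : (univ.image a).card < n := by
    calc (univ.image a).card ≤ (univ : Finset (Fin k)).card := Finset.card_image_le
    _ = k := by simp
    _ < n := hkn
  obtain ⟨x, hx⟩ : ∃ x : Fin n, x ∉ univ.image a := by
    by_contra h
    push_neg at h
    have : (univ : Finset (Fin n)) ⊆ univ.image a := fun y _ => h y
    have := Finset.card_le_card this
    simp at this
    omega
  have hxa : ∀ m, a m ≠ x := by
    intro m hm
    exact hx (Finset.mem_image.mpr ⟨m, mem_univ m, hm⟩)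
  set a' : Fin k → Fin n := Function.update a j x with ha'def
  have ha'j : a' j = x := Function.update_self j x a
  have ha'ne : ∀ m ≠ j, a' m = a m := fun m hm => Function.update_of_ne hm x a
  have haa' : a ≠ a' := by
    intro h
    exact hxa j (by rw [h, ha'j])
  -- cover equivalence
  have hcov : ∀ y : Fin n, y ≠ x → ((∃ m, a' m = y) ↔ (∃ m, a m = y)) := by
    intro y hy
    constructor
    · rintro ⟨m, hm⟩
      by_cases hmj : m = j
      · subst hmj; rw [ha'j] at hm; exact (hy hm.symm).elim
      · exact ⟨m, by rw [← ha'ne m hmj]; exact hm⟩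
    · rintro ⟨m, hm⟩
      by_cases hmj : m = j
      · exact ⟨i, by rw [ha'ne i hij, haij, ← hmj, hm]⟩
      · exact ⟨m, by rw [ha'ne m hmj]; exact hm⟩
  -- the modified strategy
  classical
  set Q' : (Fin k → Fin n) → ℝ :=
    fun b => if b = a then 0 else if b = a' then Q a' + Q a else Q b with hQ'def
  have hQ'a : Q' a = 0 := by simp [hQ'def]
  have hQ'a' : Q' a' = Q a' + Q a := by simp [hQ'def, Ne.symm haa']
  have hQ'other : ∀ b, b ≠ a → b ≠ a' → Q' b = Q b := by
    intro b h1 h2; simp [hQ'def, h1, h2]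
  -- sum lemmas
  have key1 : ∀ S : Finset (Fin k → Fin n), a ∈ S → a' ∈ S →
      ∑ b ∈ S, Q' b = ∑ b ∈ S, Q b := by
    intro S haS ha'S
    have ha'e : a' ∈ S.erase a := Finset.mem_erase.mpr ⟨Ne.symm haa', ha'S⟩
    rw [← Finset.add_sum_erase S Q' haS, ← Finset.add_sum_erase S Q haS,
        ← Finset.add_sum_erase _ Q' ha'e, ← Finset.add_sum_erase _ Q ha'e,
        hQ'a, hQ'a']
    have : ∑ b ∈ (S.erase a).erase a', Q' b = ∑ b ∈ (S.erase a).erase a', Q b := by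
      apply Finset.sum_congr rfl
      intro b hb
      exact hQ'other b (Finset.ne_of_mem_erase (Finset.mem_of_mem_erase hb))
        (Finset.ne_of_mem_erase hb)
    rw [this]; ring
  have key2 : ∀ S : Finset (Fin k → Fin n), a ∉ S → a' ∈ S →
      ∑ b ∈ S, Q' b = ∑ b ∈ S, Q b + Q a := by
    intro S haS ha'S
    rw [← Finset.add_sum_erase S Q' ha'S, ← Finset.add_sum_erase S Q ha'S, hQ'a']
    have : ∑ b ∈ S.erase a', Q' b = ∑ b ∈ S.erase a', Q b := by
      apply Finset.sum_congr rfl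
      intro b hb
      exact hQ'other b (fun h => haS (h ▸ Finset.mem_of_mem_erase hb)) (Finset.ne_of_mem_erase hb)
    rw [this]; ring
  have key3 : ∀ S : Finset (Fin k → Fin n), a ∉ S → a' ∉ S →
      ∑ b ∈ S, Q' b = ∑ b ∈ S, Q b := by
    intro S haS ha'S
    apply Finset.sum_congr rfl
    intro b hb
    exact hQ'other b (fun h => haS (h ▸ hb)) (fun h => ha'S (h ▸ hb))
  have hQ' : IsStrategy Q' := by
    constructor
    · intro b
      simp only [hQ'def]
      split_ifs with h1 h2
      · exact le_refl 0
      · have := hQ.1 a'; linarith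
      · exact hQ.1 b
    · exact (key1 univ (mem_univ a) (mem_univ a')).trans hQ.2
  -- succProb comparisons
  have hsucc_ne : ∀ y : Fin n, y ≠ x → succProb Q' y = succProb Q y := by
    intro y hy
    unfold succProb
    by_cases hmem : a ∈ univ.filter (fun b : Fin k → Fin n => ∃ m, b m = y)
    · have hmem' : a' ∈ univ.filter (fun b : Fin k → Fin n => ∃ m, b m = y) := by
        simp only [Finset.mem_filter, mem_univ, true_and] at *
        exact (hcov y hy).mpr hmem
      exact key1 _ hmem hmem'
    · have hmem' : a' ∉ univ.filter (fun b : Fin k → Fin n => ∃ m, b m = y) := by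
        simp only [Finset.mem_filter, mem_univ, true_and] at *
        exact fun h => hmem ((hcov y hy).mp h)
      exact key3 _ hmem hmem'
  have hsucc_x : succProb Q' x = succProb Q x + Q a := by
    unfold succProb
    apply key2
    · simp only [Finset.mem_filter, mem_univ, true_and]
      rintro ⟨m, hm⟩; exact hxa m hm
    · simp only [Finset.mem_filter, mem_univ, true_and]
      exact ⟨j, ha'j⟩
  -- bounds
  have hs_nonneg : 0 ≤ succProb Q x := Finset.sum_nonneg (fun b _ => hQ.1 b)
  have ht_le_one : succProb Q' x ≤ 1 := by
    rw [← hQ'.2]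
    exact Finset.sum_le_sum_of_subset_of_nonneg (Finset.subset_univ _)
      (fun b _ _ => hQ'.1 b)
  have hst : succProb Q x < succProb Q' x := by rw [hsucc_x]; linarith
  have hloss : alphaLossE α (succProb Q' x) < alphaLossE α (succProb Q x) :=
    alphaLoss_strictAnti hα hs_nonneg hst ht_le_one
  -- finiteness of the optimal value
  have hnpos : 0 < n := lt_of_le_of_lt (Nat.zero_le k) hkn
  set Q₀ : (Fin k → Fin n) → ℝ := fun _ => ((n : ℝ) ^ k)⁻¹ with hQ₀def
  have hnk : (0:ℝ) < (n:ℝ)^k := by positivity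
  have hQ₀ : IsStrategy Q₀ := by
    constructor
    · intro b; positivity
    · simp only [hQ₀def, Finset.sum_const, nsmul_eq_mul]
      rw [Finset.card_univ, Fintype.card_fun]
      simp only [Fintype.card_fin]
      push_cast
      field_simp
  have hQ₀pos : ∀ y : Fin n, 0 < succProb Q₀ y := by
    intro y
    unfold succProb
    apply Finset.sum_pos
    · intro b _; positivity
    · refine ⟨fun _ => y, ?_⟩
      simp only [Finset.mem_filter, mem_univ, true_and]
      exact ⟨⟨0, hk1⟩, trivial⟩
  have hfin : (∑ i, ENNReal.ofReal (p i) * alphaLossE α (succProb Q i)) < ⊤ := by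
    refine lt_of_le_of_lt (hopt Q₀ hQ₀) ?_
    rw [ENNReal.sum_lt_top]
    intro y _
    exact ENNReal.mul_lt_top ENNReal.ofReal_lt_top (alphaLoss_lt_top (hQ₀pos y).ne')
  -- contradiction
  have hsplit : ∀ R : (Fin k → Fin n) → ℝ,
      (∑ i, ENNReal.ofReal (p i) * alphaLossE α (succProb R i)) =
      ENNReal.ofReal (p x) * alphaLossE α (succProb R x) +
        ∑ i ∈ univ.erase x, ENNReal.ofReal (p i) * alphaLossE α (succProb R i) :=
    fun R => (Finset.add_sum_erase univ _ (mem_univ x)).symm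
  have hCeq : ∑ i ∈ univ.erase x, ENNReal.ofReal (p i) * alphaLossE α (succProb Q' i) =
      ∑ i ∈ univ.erase x, ENNReal.ofReal (p i) * alphaLossE α (succProb Q i) := by
    apply Finset.sum_congr rfl
    intro y hy
    rw [hsucc_ne y (Finset.ne_of_mem_erase hy)]
  set C := ∑ i ∈ univ.erase x, ENNReal.ofReal (p i) * alphaLossE α (succProb Q i) with hC
  have hCfin : C ≠ ⊤ := by
    refine ne_top_of_le_ne_top hfin.ne ?_
    rw [hsplit Q]
    exact le_add_self
  have hple : ENNReal.ofReal (p x) * alphaLossE α (succProb Q x) ≤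
      ENNReal.ofReal (p x) * alphaLossE α (succProb Q' x) := by
    have h := hopt Q' hQ'
    rw [hsplit Q, hsplit Q', hCeq, ← hC] at h
    exact (ENNReal.add_le_add_iff_right hCfin).mp h
  have hplt : ENNReal.ofReal (p x) * alphaLossE α (succProb Q' x) <
      ENNReal.ofReal (p x) * alphaLossE α (succProb Q x) := by
    refine (ENNReal.mul_lt_mul_iff_right ?_ ?_).mpr hloss
    · simpa using (hp0 x)
    · exact ENNReal.ofReal_ne_top
  exact absurd (lt_of_le_of_lt hple hplt) (lt_irrefl _)
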